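/- Let α, β > 0 and (v, θ, ω) ∈ ℝ³ with H₂(v,θ,ω) = 0 and H₁(v,θ,ω) ≠ 0. Then ω ≠ 0 and v ≠ 0, and with t₁ = |v|/β, t₂ = |ω|/α and s₃, s₄ ∈ {−1,1} satisfying s₃·v = −|v| and s₄·ω = −|ω|, the two-phase final state equations hold: v + s₃βt₁ = 0, ω + s₄αt₂ = 0, and θ + ωt₁ + ωt₂ + s₄αt₂²/2 = 0. -/

import Mathlib

noncomputable def H1 (α v θ ω : ℝ) : ℝ := 2 * α * θ + ω * |ω|

noncomputable def H2 (α β v θ ω : ℝ) : ℝ := ω * |ω| / (2 * α) + θ + ω * |v| / β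

theorem stmt9 (α β v θ ω : ℝ) (hα : 0 < α) (hβ : 0 < β)
    (hH2 : H2 α β v θ ω = 0) (hH1 : H1 α v θ ω ≠ 0)
    (t₁ t₂ : ℝ) (ht₁ : t₁ = |v| / β) (ht₂ : t₂ = |ω| / α)
    (s₃ s₄ : ℝ) (hs₃ : s₃ = -1 ∨ s₃ = 1) (hs₄ : s₄ = -1 ∨ s₄ = 1)
    (hs₃v : s₃ * v = -|v|) (hs₄ω : s₄ * ω = -|ω|) :
    ω ≠ 0 ∧ v ≠ 0 ∧
    v + s₃ * β * t₁ = 0 ∧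
    ω + s₄ * α * t₂ = 0 ∧
    θ + ω * t₁ + ω * t₂ + s₄ * α * t₂ ^ 2 / 2 = 0 := by
  have hα' : (α : ℝ) ≠ 0 := ne_of_gt hα
  have hβ' : (β : ℝ) ≠ 0 := ne_of_gt hβ
  unfold H1 at hH1
  unfold H2 at hH2
  have habsω : |ω| = -(s₄ * ω) := by linarith [hs₄ω]
  have habsv : |v| = -(s₃ * v) := by linarith [hs₃v]
  have hs4 : s₄ * s₄ = 1 := by rcases hs₄ with h | h <;> subst h <;> norm_num
  have hs3 : s₃ * s₃ = 1 := by rcases hs₃ with h | h <;> subst h <;> norm_num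
  have hω : ω ≠ 0 := by
    intro h
    subst h
    simp at hH2
    apply hH1
    simp [hH2]
  have hv : v ≠ 0 := by
    intro h
    subst h
    simp at hH2
    apply hH1
    field_simp at hH2
    linarith
  subst ht₁ ht₂
  rw [habsω, habsv] at hH2 ⊢
  refine ⟨hω, hv, ?_, ?_, ?_⟩
  · rcases hs₃ with h | h <;> subst h <;> field_simp <;> ring
  · rcases hs₄ with h | h <;> subst h <;> field_simp <;> ring
  · rcases hs₄ with h | h <;> subst h <;>
      · field_simp at hH2 ⊢
        linear_combination hH2
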